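/- Let K be a field of characteristic zero, X a finite connected poset, φ ∈ Δ(I(X,K)), and σ : X²_< → K the map with φ(e_{uv}) = σ(u,v) e_{uv} for all u < v (which exists). Then for every x ∈ X and every walk Γ : u_0, u_1, …, u_m in X, φ(e_x)(u_m,u_m) = φ(e_x)(u_0,u_0) − s^+_{σ,Γ}(x) + s^−_{σ,Γ}(x) − t^+_{σ,Γ}(x) + t^−_{σ,Γ}(x). In particular, for every closed walk Γ (one with u_m = u_0), s^+_{σ,Γ}(x) − s^−_{σ,Γ}(x) + t^+_{σ,Γ}(x) − t^−_{σ,Γ}(x) = 0 for all x ∈ X. -/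

import Mathlib

open scoped Classical

attribute [local instance 100] LieRing.ofAssociativeRing

noncomputable section

/-- A `1/2`-derivation of a Lie algebra `L` over `K`:
`φ ⁅a, b⁆ = (1/2) • (⁅φ a, b⁆ + ⁅a, φ b⁆)`. -/
def IsHalfDerivation (K L : Type*) [Field K] [LieRing L] [LieAlgebra K L]
    (φ : L →ₗ[K] L) : Prop :=
  ∀ a b : L, φ ⁅a, b⁆ = (2⁻¹ : K) • (⁅φ a, b⁆ + ⁅a, φ b⁆)

/-- The standard basis element `e_{xy}` (for `x ≤ y`) of the incidence algebra. -/
def eI (K : Type*) {X : Type*} [Field K] [PartialOrder X] [DecidableEq X]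
    (x y : X) (h : x ≤ y) : IncidenceAlgebra K X :=
  ⟨fun u v => if x = u ∧ y = v then (1 : K) else 0, by
    intro u v huv
    show (if x = u ∧ y = v then (1 : K) else 0) = 0
    rw [if_neg]; rintro ⟨rfl, rfl⟩; exact huv h⟩

/-- A walk `u 0, u 1, …, u m` in a poset: consecutive vertices are comparable and
cover one another (`l(x,y) = 1`). -/
def IsWalkOn {X : Type*} [PartialOrder X] (u : ℕ → X) (m : ℕ) : Prop :=
  ∀ i < m, u i ⋖ u (i + 1) ∨ u (i + 1) ⋖ u i

/-- A poset is connected if any two of its elements are joined by a walk. -/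
def ConnectedPoset (X : Type*) [PartialOrder X] : Prop :=
  ∀ x y : X, ∃ (u : ℕ → X) (m : ℕ), IsWalkOn u m ∧ u 0 = x ∧ u m = y

/-- The set `X²_<` of pairs `(x, y)` with `x < y`. -/
def LtPairs (X : Type*) [PartialOrder X] : Type _ := {p : X × X // p.1 < p.2}

/-- The value of `σ : X²_< → K` at `(x, y)`, extended by `0` to all pairs. -/
def sigVal {K X : Type*} [Field K] [PartialOrder X] (σ : LtPairs X → K) (x y : X) : K :=
  if h : x < y then σ ⟨(x, y), h⟩ else 0

/-- `s⁺_{σ,Γ}(x) = Σ_{x = u i < u (i+1)} σ (x, u (i+1))`. -/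
def sP {K X : Type*} [Field K] [PartialOrder X] (σ : LtPairs X → K)
    (u : ℕ → X) (m : ℕ) (x : X) : K :=
  ∑ i ∈ Finset.range m, if x = u i then sigVal σ x (u (i + 1)) else 0

/-- `s⁻_{σ,Γ}(x) = Σ_{u i > u (i+1) = x} σ (x, u i)`. -/
def sM {K X : Type*} [Field K] [PartialOrder X] (σ : LtPairs X → K)
    (u : ℕ → X) (m : ℕ) (x : X) : K :=
  ∑ i ∈ Finset.range m, if x = u (i + 1) then sigVal σ x (u i) else 0

/-- `t⁺_{σ,Γ}(x) = Σ_{x = u i > u (i+1)} σ (u (i+1), x)`. -/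
def tP {K X : Type*} [Field K] [PartialOrder X] (σ : LtPairs X → K)
    (u : ℕ → X) (m : ℕ) (x : X) : K :=
  ∑ i ∈ Finset.range m, if x = u i then sigVal σ (u (i + 1)) x else 0

/-- `t⁻_{σ,Γ}(x) = Σ_{u i < u (i+1) = x} σ (u i, x)`. -/
def tM {K X : Type*} [Field K] [PartialOrder X] (σ : LtPairs X → K)
    (u : ℕ → X) (m : ℕ) (x : X) : K :=
  ∑ i ∈ Finset.range m, if x = u (i + 1) then sigVal σ (u i) x else 0


section Aux
variable {K X : Type*} [Field K] [PartialOrder X] [LocallyFiniteOrder X] [DecidableEq X]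

lemma eI_apply (x y : X) (h : x ≤ y) (u v : X) :
    eI K x y h u v = if x = u ∧ y = v then (1:K) else 0 := rfl

lemma mul_eI_apply (f : IncidenceAlgebra K X) (a b : X) (h : a ≤ b) :
    (f * eI K a b h) a b = f a a := by
  rw [IncidenceAlgebra.mul_apply, Finset.sum_eq_single a]
  · simp [eI_apply]
  · intro z hz hne; simp [eI_apply, Ne.symm hne]
  · intro h'; exact absurd (Finset.mem_Icc.mpr ⟨le_rfl, h⟩) h'

lemma eI_mul_apply (f : IncidenceAlgebra K X) (a b : X) (h : a ≤ b) :
    (eI K a b h * f) a b = f b b := by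
  rw [IncidenceAlgebra.mul_apply, Finset.sum_eq_single b]
  · simp [eI_apply]
  · intro z hz hne; simp [eI_apply, Ne.symm hne]
  · intro h'; exact absurd (Finset.mem_Icc.mpr ⟨h, le_rfl⟩) h'

lemma ex_mul_eab (x a b : X) (hab : a ≤ b) :
    eI K x x le_rfl * eI K a b hab = (if x = a then (1:K) else 0) • eI K a b hab := by
  ext u v huv
  rw [IncidenceAlgebra.mul_apply, IncidenceAlgebra.constSMul_apply]
  by_cases hxu : x = u
  · subst hxu
    rw [Finset.sum_eq_single x]
    · simp only [eI_apply, and_self, if_pos rfl, one_mul]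
      by_cases hax : a = x
      · subst hax; simp
      · simp [hax, Ne.symm hax]
    · intro z hz hne; simp [eI_apply, Ne.symm hne]
    · intro h'
      have : ¬ x ≤ v := fun hle => h' (Finset.mem_Icc.mpr ⟨le_rfl, hle⟩)
      exact absurd huv this
  · rw [Finset.sum_eq_zero]
    · by_cases hau : a = u
      · subst hau; simp [hxu]
      · simp [eI_apply, hau]
    · intro z hz; simp [eI_apply, hxu]

lemma eab_mul_ex (x a b : X) (hab : a ≤ b) :
    eI K a b hab * eI K x x le_rfl = (if x = b then (1:K) else 0) • eI K a b hab := by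
  ext u v huv
  rw [IncidenceAlgebra.mul_apply, IncidenceAlgebra.constSMul_apply]
  by_cases hxv : x = v
  · subst hxv
    rw [Finset.sum_eq_single x]
    · simp only [eI_apply, and_self, if_pos rfl, mul_one]
      by_cases hbx : b = x
      · subst hbx; simp
      · simp [hbx, Ne.symm hbx]
    · intro z hz hne; simp [eI_apply]; exact fun hxz _ _ => hne hxz.symm
    · intro h'
      have : ¬ u ≤ x := fun hle => h' (Finset.mem_Icc.mpr ⟨hle, le_rfl⟩)
      exact absurd huv this
  · rw [Finset.sum_eq_zero]
    · by_cases hbv : b = v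
      · subst hbv; simp [eI_apply, fun h : x = b => hxv h]
      · simp [eI_apply, hbv]
    · intro z hz; simp [eI_apply, hxv]

lemma key_lemma [CharZero K] (φ : IncidenceAlgebra K X →ₗ[K] IncidenceAlgebra K X)
    (hφ : ∀ a b : IncidenceAlgebra K X, φ ⁅a, b⁆ = (2⁻¹ : K) • (⁅φ a, b⁆ + ⁅a, φ b⁆))
    (σ : LtPairs X → K)
    (hσ : ∀ (a b : X) (h : a < b), φ (eI K a b h.le) = σ ⟨(a, b), h⟩ • eI K a b h.le)
    (x a b : X) (h : a < b) :
    φ (eI K x x le_rfl) a a - φ (eI K x x le_rfl) b b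
      = ((if x = a then (1:K) else 0) - if x = b then 1 else 0) * σ ⟨(a, b), h⟩ := by
  set s : K := σ ⟨(a, b), h⟩ with hs
  set c : K := (if x = a then (1:K) else 0) - if x = b then 1 else 0 with hc
  have hlie : ⁅eI K x x le_rfl, eI K a b h.le⁆ = c • eI K a b h.le := by
    rw [Ring.lie_def, ex_mul_eab, eab_mul_ex, hc, sub_smul]
  have h1 := hφ (eI K x x le_rfl) (eI K a b h.le)
  have hlie2 : ⁅eI K x x le_rfl, s • eI K a b h.le⁆ = s • c • eI K a b h.le := by
    rw [Ring.lie_def, mul_smul_comm, smul_mul_assoc, ← smul_sub, ← Ring.lie_def, hlie]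
  rw [hlie, map_smul, hσ a b h, ← hs, hlie2] at h1
  have h3 : (2:K) • ((2⁻¹:K) • (⁅φ (eI K x x le_rfl), eI K a b h.le⁆ + s • c • eI K a b h.le))
      = (2:K) • (c • s • eI K a b h.le) := by rw [← h1]
  rw [smul_smul] at h3
  norm_num at h3
  have hB : ⁅φ (eI K x x le_rfl), eI K a b h.le⁆ = (c * s) • eI K a b h.le := by
    have h4 := eq_sub_of_add_eq h3
    rw [h4]; module
  have hval : (⁅φ (eI K x x le_rfl), eI K a b h.le⁆ : IncidenceAlgebra K X) a b
      = ((c * s) • eI K a b h.le) a b := by rw [hB]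
  rw [Ring.lie_def, IncidenceAlgebra.sub_apply, mul_eI_apply, eI_mul_apply,
    IncidenceAlgebra.constSMul_apply, eI_apply] at hval
  simpa using hval

lemma step_lemma [CharZero K] (φ : IncidenceAlgebra K X →ₗ[K] IncidenceAlgebra K X)
    (hφ : ∀ a b : IncidenceAlgebra K X, φ ⁅a, b⁆ = (2⁻¹ : K) • (⁅φ a, b⁆ + ⁅a, φ b⁆))
    (σ : LtPairs X → K)
    (hσ : ∀ (a b : X) (h : a < b), φ (eI K a b h.le) = σ ⟨(a, b), h⟩ • eI K a b h.le)
    (x p q : X) (h : p ⋖ q ∨ q ⋖ p) :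
    φ (eI K x x le_rfl) q q = φ (eI K x x le_rfl) p p
      - (if x = p then sigVal σ x q else 0)
      + (if x = q then sigVal σ x p else 0)
      - (if x = p then sigVal σ q x else 0)
      + (if x = q then sigVal σ p x else 0) := by
  rcases h with hpq | hqp
  · have hk := key_lemma φ hφ σ hσ x p q hpq.lt
    have hne : p ≠ q := hpq.lt.ne
    by_cases hxp : x = p <;> by_cases hxq : x = q
    · exact absurd (hxp.symm.trans hxq) hne
    · subst hxp
      simp only [if_true, if_pos rfl, if_neg hxq, sigVal, dif_pos hpq.lt,
        dif_neg (lt_asymm hpq.lt)] at hk ⊢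
      linear_combination -hk
    · subst hxq
      simp only [if_true, if_neg hxp, if_pos rfl, sigVal, dif_pos hpq.lt,
        dif_neg (lt_asymm hpq.lt)] at hk ⊢
      linear_combination -hk
    · simp only [if_neg hxp, if_neg hxq] at hk ⊢
      linear_combination -hk
  · have hk := key_lemma φ hφ σ hσ x q p hqp.lt
    have hne : q ≠ p := hqp.lt.ne
    by_cases hxp : x = p <;> by_cases hxq : x = q
    · exact absurd (hxq.symm.trans hxp) hne
    · subst hxp
      simp only [if_true, if_pos rfl, if_neg hxq, sigVal, dif_pos hqp.lt,
        dif_neg (lt_asymm hqp.lt)] at hk ⊢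
      linear_combination hk
    · subst hxq
      simp only [if_true, if_neg hxp, if_pos rfl, sigVal, dif_pos hqp.lt,
        dif_neg (lt_asymm hqp.lt)] at hk ⊢
      linear_combination hk
    · simp only [if_neg hxp, if_neg hxq] at hk ⊢
      linear_combination hk

lemma sP_succ (σ : LtPairs X → K) (u : ℕ → X) (n : ℕ) (x : X) :
    sP σ u (n + 1) x = sP σ u n x + (if x = u n then sigVal σ x (u (n + 1)) else 0) := by
  simp [sP, sM, tP, tM, Finset.sum_range_succ]

lemma sM_succ (σ : LtPairs X → K) (u : ℕ → X) (n : ℕ) (x : X) :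
    sM σ u (n + 1) x = sM σ u n x + (if x = u (n + 1) then sigVal σ x (u n) else 0) := by
  simp [sP, sM, tP, tM, Finset.sum_range_succ]

lemma tP_succ (σ : LtPairs X → K) (u : ℕ → X) (n : ℕ) (x : X) :
    tP σ u (n + 1) x = tP σ u n x + (if x = u n then sigVal σ (u (n + 1)) x else 0) := by
  simp [sP, sM, tP, tM, Finset.sum_range_succ]

lemma tM_succ (σ : LtPairs X → K) (u : ℕ → X) (n : ℕ) (x : X) :
    tM σ u (n + 1) x = tM σ u n x + (if x = u (n + 1) then sigVal σ (u n) x else 0) := by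
  simp [sP, sM, tP, tM, Finset.sum_range_succ]

end Aux

/-- for `φ ∈ Δ(I(X,K))` with `φ e_{uv} = σ(u,v) e_{uv}` for all `u < v`,
along any walk `Γ : u 0, …, u m` one has
`φ(e_x)(u m, u m) = φ(e_x)(u 0, u 0) − s⁺ + s⁻ − t⁺ + t⁻`, and for closed walks
`s⁺ − s⁻ + t⁺ − t⁻ = 0`. -/
theorem statement13 (K X : Type*) [Field K] [CharZero K] [PartialOrder X] [Fintype X]
    [LocallyFiniteOrder X] [DecidableEq X] (hconn : ConnectedPoset X)
    (φ : IncidenceAlgebra K X →ₗ[K] IncidenceAlgebra K X)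
    (hφ : IsHalfDerivation K (IncidenceAlgebra K X) φ)
    (σ : LtPairs X → K)
    (hσ : ∀ (a b : X) (h : a < b), φ (eI K a b h.le) = σ ⟨(a, b), h⟩ • eI K a b h.le) :
    ∀ (x : X) (u : ℕ → X) (m : ℕ), IsWalkOn u m →
      (φ (eI K x x le_rfl) (u m) (u m) =
        φ (eI K x x le_rfl) (u 0) (u 0)
          - sP σ u m x + sM σ u m x - tP σ u m x + tM σ u m x) ∧
      (u m = u 0 → sP σ u m x - sM σ u m x + tP σ u m x - tM σ u m x = 0) := by
  intro x u m hw
  have H : ∀ n, IsWalkOn u n →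
      φ (eI K x x le_rfl) (u n) (u n) =
        φ (eI K x x le_rfl) (u 0) (u 0)
          - sP σ u n x + sM σ u n x - tP σ u n x + tM σ u n x := by
    intro n
    induction n with
    | zero => intro _; simp [sP, sM, tP, tM]
    | succ n ih =>
      intro hwn
      have hih := ih fun i hi => hwn i (hi.trans (Nat.lt_succ_self n))
      have hstep := step_lemma φ hφ σ hσ x (u n) (u (n + 1)) (hwn n (Nat.lt_succ_self n))
      rw [sP_succ, sM_succ, tP_succ, tM_succ, hstep, hih]
      ring
  refine ⟨H m hw, fun hc => ?_⟩
  have h1 := H m hw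
  rw [hc] at h1
  linear_combination h1
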